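/- For an odd integer m ≥ 2, an integer n coprime to m, and any integer c, the Euler quotient satisfies Q_m(n + c·m) ≡ Q_m(n) + c·n^{−1}·φ(m) (mod m), where n^{−1} denotes the inverse of n modulo m. -/

import Mathlib

def eulerQuotient (m : ℕ) (n : ℤ) : ℤ :=
  if Int.gcd n m = 1 then ((n ^ Nat.totient m - 1) / (m : ℤ)) % (m : ℤ) else 0

lemma binom_aux (x y : ℤ) : ∀ k : ℕ, ∃ E : ℤ,
    (x + y) ^ k = x ^ k + k * x ^ (k - 1) * y + y ^ 2 * E := by
  intro k
  induction k with
  | zero => exact ⟨0, by norm_num⟩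
  | succ k ih =>
    obtain ⟨E, hE⟩ := ih
    rcases Nat.eq_zero_or_pos k with hk | hk
    · subst hk; exact ⟨0, by ring⟩
    · obtain ⟨j, rfl⟩ : ∃ j, k = j + 1 := ⟨k - 1, by omega⟩
      refine ⟨x * E + (j + 1) * x ^ j + y * E, ?_⟩
      simp only [Nat.add_sub_cancel] at hE ⊢
      rw [pow_succ, hE]
      push_cast
      ring

theorem eulerQuotient_add_mul (m : ℕ) (hm : 2 ≤ m) (hodd : Odd m) (n c u : ℤ)
    (hn : Int.gcd n m = 1) (hu : n * u ≡ 1 [ZMOD m]) :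
    eulerQuotient m (n + c * m) ≡ eulerQuotient m n + c * u * (Nat.totient m : ℤ) [ZMOD m] := by
  set φ := Nat.totient m with hφdef
  have hφ : 1 ≤ φ := Nat.totient_pos.mpr (by omega)
  have hm0 : (m : ℤ) ≠ 0 := by positivity
  -- cast hu to ZMod
  have hu' : (n : ZMod m) * u = 1 := by
    have := (ZMod.intCast_eq_intCast_iff _ _ _).mpr hu
    push_cast at this ⊢; exact this
  have hunit : IsUnit (n : ZMod m) := IsUnit.of_mul_eq_one _ hu'
  have h1 : (n : ZMod m) ^ φ = 1 := by
    obtain ⟨v, hv⟩ := hunit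
    rw [← hv, ← Units.val_pow_eq_pow_val, ZMod.pow_totient v, Units.val_one]
  have hE : (n : ℤ) ^ φ ≡ 1 [ZMOD m] := by
    rw [← ZMod.intCast_eq_intCast_iff]; push_cast; rw [h1]
  obtain ⟨q, hq⟩ : (m : ℤ) ∣ n ^ φ - 1 := Int.ModEq.dvd hE.symm
  obtain ⟨E, hEeq⟩ := binom_aux n (c * m) φ
  have hg2 : Int.gcd (n + c * m) m = 1 := by
    rw [← Int.isCoprime_iff_gcd_eq_one] at hn ⊢
    exact IsCoprime.add_mul_right_left hn c
  have key1 : ((n + c * m) ^ φ - 1) / m = q + φ * n ^ (φ - 1) * c + c ^ 2 * m * E := by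
    have : (n + c * m) ^ φ - 1 = m * (q + φ * n ^ (φ - 1) * c + c ^ 2 * m * E) := by
      rw [hEeq]; linear_combination hq
    rw [this, Int.mul_ediv_cancel_left _ hm0]
  have key2 : (n ^ φ - 1) / m = q := by
    rw [hq, Int.mul_ediv_cancel_left _ hm0]
  rw [eulerQuotient, eulerQuotient, if_pos hg2, if_pos hn, key1, key2]
  -- finish in ZMod m
  rw [← ZMod.intCast_eq_intCast_iff]
  have hpow : (n : ZMod m) ^ (φ - 1) = u := by
    calc (n : ZMod m) ^ (φ - 1) = (n : ZMod m) ^ (φ - 1) * ((n : ZMod m) * u) := by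
          rw [hu', mul_one]
      _ = (n : ZMod m) ^ φ * u := by
          rw [← mul_assoc, ← pow_succ]; congr 2; omega
      _ = u := by rw [h1, one_mul]
  push_cast [ZMod.intCast_mod]
  rw [hpow]
  push_cast
  ring_nf
  simp [ZMod.natCast_self]
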